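/- Assume the antitree is equilateral: ℓ_n = ℓ > 0 for all n, so t_n = nℓ and L = ∞. Then for every n ∈ ℕ: ∫_{(nℓ,(n+2)ℓ)} μ(x) dx · ∫_{(nℓ,(n+2)ℓ)} μ(x)⁻¹ dx − 4ℓ² = ℓ² (s_{n+2} − s_n)²/(s_n s_{n+2}). Consequently, if Σ_{n=0}^∞ (s_{n+2}/s_n − 1)² < ∞, then Σ_{n=0}^∞ ( ∫_{(nℓ,(n+2)ℓ)} μ(x) dx · ∫_{(nℓ,(n+2)ℓ)} μ(x)⁻¹ dx − 4ℓ² ) < ∞. -/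

import Mathlib

open MeasureTheory
open scoped ENNReal

/-- proof of Corollary 9.2, equilateral antitrees.  If all
edges have the same length `l > 0` (so `tₙ = n·l` and `L = ∞`), then for every
`n`:
`∫_{nl}^{(n+2)l} μ · ∫_{nl}^{(n+2)l} 1/μ − 4l² = l² (sₙ₊₂−sₙ)²/(sₙsₙ₊₂)`,
and consequently, if `Σ (sₙ₊₂/sₙ − 1)² < ∞`, then
`Σₙ (∫ μ · ∫ 1/μ − 4l²) < ∞`. -/
lemma piece_lintegral (f : ℝ → ℝ) (p q r c₁ c₂ : ℝ) (hpq : p < q) (hqr : q < r)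
    (h1 : ∀ x ∈ Set.Ico p q, f x = c₁) (h2 : ∀ x ∈ Set.Ico q r, f x = c₂) :
    ∫⁻ x in Set.Ioo p r, ENNReal.ofReal (f x)
      = ENNReal.ofReal c₁ * ENNReal.ofReal (q - p) +
        ENNReal.ofReal c₂ * ENNReal.ofReal (r - q) := by
  rw [← Set.Ioo_union_Ico_eq_Ioo hpq hqr.le,
    lintegral_union measurableSet_Ico
      ((Set.Iio_disjoint_Ici le_rfl).mono Set.Ioo_subset_Iio_self Set.Ico_subset_Ici_self)]
  rw [setLIntegral_congr_fun_ae measurableSet_Ioo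
      (Filter.Eventually.of_forall fun x hx => by
        rw [h1 x ⟨hx.1.le, hx.2⟩] : ∀ᵐ x ∂volume, x ∈ Set.Ioo p q →
          ENNReal.ofReal (f x) = (fun _ => ENNReal.ofReal c₁) x),
    setLIntegral_congr_fun_ae measurableSet_Ico
      (Filter.Eventually.of_forall fun x hx => by
        rw [h2 x hx] : ∀ᵐ x ∂volume, x ∈ Set.Ico q r →
          ENNReal.ofReal (f x) = (fun _ => ENNReal.ofReal c₂) x),
    setLIntegral_const, setLIntegral_const, Real.volume_Ioo, Real.volume_Ico]

set_option maxHeartbeats 1000000 in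
theorem equilateral_antitree_ac_computation (s : ℕ → ℕ) (hs : ∀ n, 1 ≤ s n)
    (l : ℝ) (hl : 0 < l)
    (μ : ℝ → ℝ)
    (hμ : ∀ n : ℕ, ∀ x ∈ Set.Ico ((n : ℝ) * l) (((n : ℝ) + 1) * l),
      μ x = (s n : ℝ) * (s (n + 1) : ℝ))
    (hμneg : ∀ x : ℝ, x < 0 → μ x = 1) :
    (∀ n : ℕ,
      ENNReal.ofReal (4 * l ^ 2) ≤
        (∫⁻ x in Set.Ioo ((n : ℝ) * l) (((n : ℝ) + 2) * l), ENNReal.ofReal (μ x)) *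
          (∫⁻ x in Set.Ioo ((n : ℝ) * l) (((n : ℝ) + 2) * l), ENNReal.ofReal ((μ x)⁻¹)) ∧
      (∫⁻ x in Set.Ioo ((n : ℝ) * l) (((n : ℝ) + 2) * l), ENNReal.ofReal (μ x)) *
          (∫⁻ x in Set.Ioo ((n : ℝ) * l) (((n : ℝ) + 2) * l), ENNReal.ofReal ((μ x)⁻¹)) -
        ENNReal.ofReal (4 * l ^ 2) =
      ENNReal.ofReal
        (l ^ 2 * ((s (n + 2) : ℝ) - (s n : ℝ)) ^ 2 / ((s n : ℝ) * (s (n + 2) : ℝ)))) ∧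
    (Summable (fun n : ℕ => ((s (n + 2) : ℝ) / (s n : ℝ) - 1) ^ 2) →
      (∑' n : ℕ,
        ((∫⁻ x in Set.Ioo ((n : ℝ) * l) (((n : ℝ) + 2) * l), ENNReal.ofReal (μ x)) *
            (∫⁻ x in Set.Ioo ((n : ℝ) * l) (((n : ℝ) + 2) * l), ENNReal.ofReal ((μ x)⁻¹)) -
          ENNReal.ofReal (4 * l ^ 2))) < ∞) := by
  have hsn : ∀ n, (0:ℝ) < s n := fun n => by exact_mod_cast hs n
  -- per-n computation of the product of integrals
  have hprod : ∀ n : ℕ,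
      (∫⁻ x in Set.Ioo ((n : ℝ) * l) (((n : ℝ) + 2) * l), ENNReal.ofReal (μ x)) *
        (∫⁻ x in Set.Ioo ((n : ℝ) * l) (((n : ℝ) + 2) * l), ENNReal.ofReal ((μ x)⁻¹)) =
      ENNReal.ofReal
        ((l * ((s n * s (n+1) : ℝ) + (s (n+1) * s (n+2) : ℝ))) *
         (l * ((s n * s (n+1) : ℝ)⁻¹ + (s (n+1) * s (n+2) : ℝ)⁻¹))) := by
    intro n
    have hA := hsn n; have hM := hsn (n+1); have hB := hsn (n+2)
    have hpq : (n:ℝ) * l < ((n:ℝ)+1) * l := by nlinarith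
    have hqr : ((n:ℝ)+1) * l < ((n:ℝ)+2) * l := by nlinarith
    have h1 : ∀ x ∈ Set.Ico ((n:ℝ)*l) (((n:ℝ)+1)*l), μ x = (s n * s (n+1) : ℝ) := by
      intro x hx; rw [hμ n x hx]
    have h2 : ∀ x ∈ Set.Ico (((n:ℝ)+1)*l) (((n:ℝ)+2)*l), μ x = (s (n+1) * s (n+2) : ℝ) := by
      intro x hx
      have hx' : x ∈ Set.Ico (((n+1:ℕ):ℝ)*l) ((((n+1:ℕ):ℝ)+1)*l) := by
        constructor <;> push_cast <;> [exact hx.1; simpa [show ((n:ℝ)+1+1) = (n:ℝ)+2 by ring] using hx.2]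
      rw [hμ (n+1) x hx']
    have h1' : ∀ x ∈ Set.Ico ((n:ℝ)*l) (((n:ℝ)+1)*l), (μ x)⁻¹ = ((s n * s (n+1) : ℝ))⁻¹ := by
      intro x hx; rw [h1 x hx]
    have h2' : ∀ x ∈ Set.Ico (((n:ℝ)+1)*l) (((n:ℝ)+2)*l), (μ x)⁻¹ = ((s (n+1) * s (n+2) : ℝ))⁻¹ := by
      intro x hx; rw [h2 x hx]
    rw [piece_lintegral μ _ _ _ _ _ hpq hqr h1 h2,
      piece_lintegral (fun x => (μ x)⁻¹) _ _ _ _ _ hpq hqr h1' h2']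
    have e1 : ((n:ℝ)+1)*l - (n:ℝ)*l = l := by ring
    have e2 : ((n:ℝ)+2)*l - (((n:ℝ)+1))*l = l := by ring
    rw [e1, e2, ← ENNReal.ofReal_mul (by positivity), ← ENNReal.ofReal_mul (by positivity),
      ← ENNReal.ofReal_add (by positivity) (by positivity),
      ← ENNReal.ofReal_mul (by positivity), ← ENNReal.ofReal_mul (by positivity),
      ← ENNReal.ofReal_add (by positivity) (by positivity),
      ← ENNReal.ofReal_mul (by positivity)]
    congr 1; ring
  have key : ∀ n : ℕ,
      ENNReal.ofReal (4 * l ^ 2) ≤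
        (∫⁻ x in Set.Ioo ((n : ℝ) * l) (((n : ℝ) + 2) * l), ENNReal.ofReal (μ x)) *
          (∫⁻ x in Set.Ioo ((n : ℝ) * l) (((n : ℝ) + 2) * l), ENNReal.ofReal ((μ x)⁻¹)) ∧
      (∫⁻ x in Set.Ioo ((n : ℝ) * l) (((n : ℝ) + 2) * l), ENNReal.ofReal (μ x)) *
          (∫⁻ x in Set.Ioo ((n : ℝ) * l) (((n : ℝ) + 2) * l), ENNReal.ofReal ((μ x)⁻¹)) -
        ENNReal.ofReal (4 * l ^ 2) =
      ENNReal.ofReal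
        (l ^ 2 * ((s (n + 2) : ℝ) - (s n : ℝ)) ^ 2 / ((s n : ℝ) * (s (n + 2) : ℝ))) := by
    intro n
    have hA := hsn n; have hM := hsn (n+1); have hB := hsn (n+2)
    set P : ℝ := (l * ((s n * s (n+1) : ℝ) + (s (n+1) * s (n+2) : ℝ))) *
         (l * ((s n * s (n+1) : ℝ)⁻¹ + (s (n+1) * s (n+2) : ℝ)⁻¹)) with hP
    have hsub : P - 4 * l ^ 2
        = l ^ 2 * ((s (n + 2) : ℝ) - (s n : ℝ)) ^ 2 / ((s n : ℝ) * (s (n + 2) : ℝ)) := by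
      rw [hP]; field_simp; ring
    have hle : 4 * l ^ 2 ≤ P := by
      have : (0:ℝ) ≤ l ^ 2 * ((s (n + 2) : ℝ) - (s n : ℝ)) ^ 2 / ((s n : ℝ) * (s (n + 2) : ℝ)) := by
        positivity
      linarith [hsub]
    rw [hprod n]
    refine ⟨ENNReal.ofReal_le_ofReal hle, ?_⟩
    rw [← ENNReal.ofReal_sub _ (by positivity), hsub]
  refine ⟨key, fun hsum => ?_⟩
  set c : ℕ → ℝ := fun n =>
    l ^ 2 * ((s (n + 2) : ℝ) - (s n : ℝ)) ^ 2 / ((s n : ℝ) * (s (n + 2) : ℝ)) with hc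
  set a : ℕ → ℝ := fun n => ((s (n + 2) : ℝ) / (s n : ℝ) - 1) ^ 2 with ha
  have h0 : Filter.Tendsto a Filter.atTop (nhds 0) := hsum.tendsto_atTop_zero
  obtain ⟨N, hN⟩ := Filter.eventually_atTop.mp (h0.eventually_lt_const (by norm_num : (0:ℝ) < 1/4))
  have hbound : ∀ n ≥ N, c n ≤ 2 * l ^ 2 * a n := by
    intro n hn
    have h4 := hN n hn
    have hA := hsn n; have hB := hsn (n+2)
    have hr : (s n : ℝ) ≤ 2 * s (n+2) := by
      by_contra h; push_neg at h
      have hlt : (s (n+2):ℝ) / s n < 1/2 := by rw [div_lt_iff₀ hA]; linarith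
      have hge : (0:ℝ) < (s (n+2):ℝ) / s n := by positivity
      simp only [ha] at h4
      nlinarith
    have hae : a n = ((s (n + 2) : ℝ) - (s n : ℝ)) ^ 2 / (s n : ℝ) ^ 2 := by
      simp only [ha]; field_simp
    rw [hc, hae]
    rw [div_le_iff₀ (by positivity : (0:ℝ) < (s n : ℝ) * s (n+2))]
    have expand : 2 * l ^ 2 * (((s (n + 2) : ℝ) - (s n : ℝ)) ^ 2 / (s n : ℝ) ^ 2)
        * ((s n : ℝ) * s (n+2))
        = 2 * l ^ 2 * ((s (n + 2) : ℝ) - (s n : ℝ)) ^ 2 * (s (n+2) / s n) := by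
      field_simp
    rw [expand]
    have h1 : (1:ℝ)/2 ≤ s (n+2) / s n := by rw [le_div_iff₀ hA]; linarith
    nlinarith [mul_nonneg (sq_nonneg l) (sq_nonneg ((s (n + 2) : ℝ) - (s n : ℝ)))]
  have hcsum : Summable c := by
    refine (summable_nat_add_iff N).mp ?_
    refine Summable.of_nonneg_of_le (fun n => by rw [hc]; positivity)
      (fun n => hbound (n + N) (Nat.le_add_left N n)) ?_
    exact ((summable_nat_add_iff N).mpr (hsum.mul_left (2 * l ^ 2)))
  calc (∑' n : ℕ,
        ((∫⁻ x in Set.Ioo ((n : ℝ) * l) (((n : ℝ) + 2) * l), ENNReal.ofReal (μ x)) *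
            (∫⁻ x in Set.Ioo ((n : ℝ) * l) (((n : ℝ) + 2) * l), ENNReal.ofReal ((μ x)⁻¹)) -
          ENNReal.ofReal (4 * l ^ 2)))
      = ∑' n : ℕ, ENNReal.ofReal (c n) := tsum_congr fun n => (key n).2
    _ = ENNReal.ofReal (∑' n, c n) :=
        (ENNReal.ofReal_tsum_of_nonneg (fun n => by rw [hc]; positivity) hcsum).symm
    _ < ∞ := ENNReal.ofReal_lt_top
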